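/- For every g ∈ G and n ∈ ℕ, the operator U_g S^n (S^n)* (U_g)* ∈ B(ℓ²(G)) equals the orthogonal projection onto the closed subspace of functions in ℓ²(G) vanishing outside the coset g·φ^n(G); in particular its value depends only on the coset g·φ^n(G). Consequently, if g_1, …, g_k ∈ G form a complete set of representatives of the left cosets of φ^n(G) in G, then ∑_{j=1}^k U_{g_j} S^n (S^n)* (U_{g_j})* = 1. -/

import Mathlib

/-- `ℓ²(G)`. -/
noncomputable abbrev l2 (G : Type*) := lp (fun _ : G => ℂ) 2

/-- The orthonormal basis vector `ξ_h ∈ ℓ²(G)`. -/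
noncomputable def xi (G : Type*) [DecidableEq G] (h : G) : l2 G := lp.single 2 h (1 : ℂ)

/-- `φ^n(G)` as a subgroup of `G`. -/
def rng {G : Type*} [Group G] (φ : Monoid.End G) (n : ℕ) : Subgroup G :=
  MonoidHom.range ((φ ^ n : Monoid.End G) : G →* G)

/-- The operator `P g n = U_g S^n (S^n)* (U_g)*`. -/
noncomputable def P {G : Type*} (U : G → (l2 G →L[ℂ] l2 G)) (S : l2 G →L[ℂ] l2 G)
    (g : G) (n : ℕ) : l2 G →L[ℂ] l2 G :=
  U g * S ^ n * star (S ^ n) * star (U g)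

/-- The subspace of `ℓ²(G)` of functions vanishing outside the coset `g·φ^n(G)`. -/
def V {G : Type*} [Group G] (φ : Monoid.End G) (g : G) (n : ℕ) : Set (l2 G) :=
  {f | ∀ x : G, g⁻¹ * x ∉ rng φ n → f x = 0}

section Aux

open scoped InnerProductSpace Classical

variable {G : Type*} [Group G] [DecidableEq G]

lemma inner_xi_left (a : G) (f : l2 G) : ⟪xi G a, f⟫_ℂ = f a := by
  simp [xi, lp.inner_single_left]

lemma inner_xi_xi (a b : G) : ⟪xi G a, xi G b⟫_ℂ = if b = a then 1 else 0 := by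
  rw [inner_xi_left, xi, lp.single_apply]
  split_ifs <;> simp_all

/-- Coordinate evaluation is continuous on `l2 G`. -/
lemma continuous_eval (x : G) : Continuous (fun f : l2 G => f x) := by
  refine (LipschitzWith.of_dist_le_mul (K := 1) fun f g => ?_).continuous
  simp only [dist_eq_norm, NNReal.coe_one, one_mul]
  have : f x - g x = (f - g) x := by rw [lp.coeFn_sub]; rfl
  rw [this]
  exact lp.norm_apply_le_norm (by norm_num) (f - g) x

lemma coord_eq_inner (f : l2 G) (x : G) : f x = ⟪xi G x, f⟫_ℂ := (inner_xi_left x f).symm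

lemma l2_ext {f g : l2 G} (h : ∀ x, f x = g x) : f = g := lp.ext (funext h)

variable (φ : Monoid.End G) (hinj : Function.Injective φ)
variable (U : G → (l2 G →L[ℂ] l2 G)) (S : l2 G →L[ℂ] l2 G)
variable (hU : ∀ g h : G, U g (xi G h) = xi G (g * h))
variable (hS : ∀ h : G, S (xi G h) = xi G (φ h))

include hinj in
lemma pow_inj (n : ℕ) : Function.Injective ((φ ^ n : Monoid.End G) : G → G) := by
  rw [Monoid.End.coe_pow]
  exact Function.Injective.iterate hinj n

include hS in
lemma Sn_xi (n : ℕ) (h : G) : (S ^ n) (xi G h) = xi G ((φ ^ n) h) := by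
  induction n generalizing h with
  | zero => simp
  | succ n ih =>
    have h1 : (S ^ (n + 1)) (xi G h) = (S ^ n) (S (xi G h)) := by
      rw [pow_succ, ContinuousLinearMap.mul_apply]
    have h2 : ((φ ^ (n + 1) : Monoid.End G)) h = (φ ^ n) (φ h) := by
      rw [pow_succ]; rfl
    rw [h1, hS, ih, h2]

/-- Adjoint computation: `⟪f, star A g⟫ = ⟪A f, g⟫`. -/
lemma star_inner_right (A : l2 G →L[ℂ] l2 G) (f g : l2 G) :
    ⟪f, (star A) g⟫_ℂ = ⟪A f, g⟫_ℂ := by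
  rw [ContinuousLinearMap.star_eq_adjoint, ContinuousLinearMap.adjoint_inner_right]

include hU in
lemma star_U_xi (g x : G) : (star (U g)) (xi G x) = xi G (g⁻¹ * x) := by
  apply l2_ext
  intro h
  rw [coord_eq_inner, coord_eq_inner, star_inner_right, hU, inner_xi_xi, inner_xi_xi]
  congr 1
  simp only [eq_iff_iff]
  constructor
  · rintro rfl; simp
  · rintro rfl; group

include hS in
include hinj in
lemma star_Sn_xi_mem (n : ℕ) (z : G) : (star (S ^ n)) (xi G ((φ ^ n) z)) = xi G z := by
  apply l2_ext
  intro h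
  rw [coord_eq_inner, coord_eq_inner, star_inner_right, Sn_xi φ S hS,
    inner_xi_xi, inner_xi_xi]
  congr 1
  simp only [eq_iff_iff]
  constructor
  · intro hzh; exact pow_inj φ hinj n hzh
  · rintro rfl; rfl

include hS in
lemma star_Sn_xi_notmem (n : ℕ) (x : G) (hx : x ∉ rng φ n) :
    (star (S ^ n)) (xi G x) = 0 := by
  apply l2_ext
  intro h
  rw [coord_eq_inner, star_inner_right, Sn_xi φ S hS, inner_xi_xi]
  have : ¬ x = (φ ^ n) h := by
    rintro rfl; exact hx ⟨h, rfl⟩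
  rw [if_neg this]
  simp [lp.coeFn_zero]

include hinj hU hS in
lemma P_xi (g : G) (n : ℕ) (x : G) :
    P U S g n (xi G x) = if g⁻¹ * x ∈ rng φ n then xi G x else 0 := by
  simp only [P, ContinuousLinearMap.mul_apply]
  rw [star_U_xi U hU]
  by_cases hm : g⁻¹ * x ∈ rng φ n
  · obtain ⟨z, hz⟩ := hm
    have hz' : ((φ ^ n : Monoid.End G)) z = g⁻¹ * x := hz
    rw [if_pos ⟨z, hz⟩, ← hz', star_Sn_xi_mem φ hinj S hS, Sn_xi φ S hS, hz', hU]
    congr 1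
    group
  · rw [if_neg hm, star_Sn_xi_notmem φ S hS n _ hm]
    simp

include hinj hU hS in
lemma P_coord (g : G) (n : ℕ) (f : l2 G) (x : G) :
    (P U S g n f) x = if g⁻¹ * x ∈ rng φ n then f x else 0 := by
  have hsa : star (P U S g n) = P U S g n := by
    simp only [P, star_mul, star_star, mul_assoc]
  rw [coord_eq_inner]
  conv_lhs => rw [← hsa]
  rw [star_inner_right, P_xi φ hinj U S hU hS]
  split_ifs with h
  · exact (coord_eq_inner f x).symm
  · simp

end Aux

open scoped InnerProductSpace

/-- **Statement 6.** For every `g ∈ G` and `n ∈ ℕ`, `U_g S^n (S^n)* (U_g)*` is the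
orthogonal projection onto the closed subspace of functions vanishing outside the coset
`g·φ^n(G)` (it is self-adjoint, it maps into that subspace and fixes it pointwise); in
particular it only depends on the coset `g·φ^n(G)`.  Consequently, if `g_1, …, g_k` is a
complete set of representatives of the left cosets of `φ^n(G)`, then
`∑ⱼ U_{gⱼ} S^n (S^n)* (U_{gⱼ})* = 1`. -/
theorem P_is_orthogonal_projection (G : Type*) [Group G] [DecidableEq G]
    (φ : Monoid.End G) (hinj : Function.Injective φ) (hfin : Finite (G ⧸ rng φ 1))
    (U : G → (l2 G →L[ℂ] l2 G)) (S : l2 G →L[ℂ] l2 G)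
    (hU : ∀ g h : G, U g (xi G h) = xi G (g * h))
    (hS : ∀ h : G, S (xi G h) = xi G (φ h)) :
    (∀ (g : G) (n : ℕ), IsClosed (V φ g n)) ∧
    (∀ (g : G) (n : ℕ), star (P U S g n) = P U S g n) ∧
    (∀ (g : G) (n : ℕ) (f : l2 G), P U S g n f ∈ V φ g n) ∧
    (∀ (g : G) (n : ℕ) (f : l2 G), f ∈ V φ g n → P U S g n f = f) ∧
    (∀ (g g' : G) (n : ℕ), g⁻¹ * g' ∈ rng φ n → P U S g n = P U S g' n) ∧
    (∀ (n k : ℕ) (r : Fin k → G),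
      Function.Bijective (fun j => (QuotientGroup.mk (r j) : G ⧸ rng φ n)) →
      ∑ j : Fin k, P U S (r j) n = 1) := by
  have hcoord := P_coord φ hinj U S hU hS
  refine ⟨?_, ?_, ?_, ?_, ?_, ?_⟩
  · -- closedness
    intro g n
    have : V φ g n = ⋂ x ∈ {x : G | g⁻¹ * x ∉ rng φ n}, {f : l2 G | f x = 0} := by
      ext f
      simp [V, Set.mem_iInter]
    rw [this]
    exact isClosed_biInter fun x _ =>
      isClosed_eq (continuous_eval x) continuous_const
  · -- self-adjoint
    intro g n
    simp only [P, star_mul, star_star, mul_assoc]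
  · -- maps into V
    intro g n f x hx
    rw [hcoord, if_neg hx]
  · -- fixes V
    intro g n f hf
    apply l2_ext
    intro x
    rw [hcoord]
    split_ifs with h
    · rfl
    · exact (hf x h).symm
  · -- depends only on coset
    intro g g' n hgg'
    classical
    ext f : 1
    apply l2_ext
    intro x
    rw [hcoord, hcoord]
    have : g⁻¹ * x ∈ rng φ n ↔ g'⁻¹ * x ∈ rng φ n := by
      constructor
      · intro h
        have := mul_mem (inv_mem hgg') h
        simpa [mul_assoc] using this
      · intro h
        have := mul_mem hgg' h
        simpa [mul_assoc] using this
    exact if_congr this rfl rfl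
  · -- sum over coset representatives
    intro n k r hbij
    classical
    ext f : 1
    apply l2_ext
    intro x
    rw [ContinuousLinearMap.sum_apply, lp.coeFn_sum, Finset.sum_apply]
    simp only [hcoord]
    have key : ∀ j : Fin k, ((r j)⁻¹ * x ∈ rng φ n) ↔
        (QuotientGroup.mk (r j) : G ⧸ rng φ n) = QuotientGroup.mk x := by
      intro j
      exact (QuotientGroup.eq).symm
    let e : Fin k ≃ G ⧸ rng φ n := Equiv.ofBijective _ hbij
    have key2 : ∀ j : Fin k, ((r j)⁻¹ * x ∈ rng φ n) ↔ j = e.symm (QuotientGroup.mk x) := by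
      intro j
      rw [key j]
      constructor
      · intro h
        have : e j = QuotientGroup.mk x := h
        rw [← this, Equiv.symm_apply_apply]
      · rintro rfl
        exact e.apply_symm_apply _
    calc (∑ j : Fin k, if (r j)⁻¹ * x ∈ rng φ n then f x else 0)
        = ∑ j : Fin k, if j = e.symm (QuotientGroup.mk x) then f x else 0 := by
          apply Finset.sum_congr rfl
          intro j _
          simp only [key2 j]
      _ = f x := by rw [Finset.sum_ite_eq' Finset.univ _ (fun _ => f x)]; simp
      _ = (1 : l2 G →L[ℂ] l2 G) f x := rfl
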